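/- For n ≥ 3, the eigenvalue n−1 of the adjacency matrix of the burnt pancake graph BP_n has multiplicity at least 2. -/

import Mathlib

/-- The set `±[n] = {-n, …, -1, 1, …, n}` as a subtype of `ℤ`. -/
def PM (n : ℕ) : Type := {x : ℤ // x ≠ 0 ∧ x.natAbs ≤ n}

instance (n : ℕ) : DecidableEq (PM n) := fun _ _ =>
  decidable_of_iff _ Subtype.ext_iff.symm

instance (n : ℕ) : Finite (PM n) :=
  Set.Finite.to_subtype (s := {x : ℤ | x ≠ 0 ∧ x.natAbs ≤ n})
    (Set.Finite.subset (Set.finite_Icc (-(n : ℤ)) n)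
      (fun x hx => by simp only [Set.mem_setOf_eq] at hx; simp only [Set.mem_Icc]; omega))

noncomputable instance (n : ℕ) : Fintype (PM n) := Fintype.ofFinite _

/-- Negation on `±[n]`. -/
def negPM (n : ℕ) (x : PM n) : PM n :=
  ⟨-x.1, by have hx := x.2; constructor <;> omega⟩

/-- The `i`-th signed prefix reversal `r_i = (1,-i)(2,-(i-1))⋯(i,-1)` as a
function on `ℤ`: it sends `x` with `1 ≤ x ≤ i` to `-(i+1-x)`, sends `x` with
`-i ≤ x ≤ -1` to `i+1+x`, and fixes every other `x`. -/
def rfun (i x : ℤ) : ℤ :=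
  if 1 ≤ x ∧ x ≤ i then x - i - 1 else if -i ≤ x ∧ x ≤ -1 then x + i + 1 else x

lemma rfun_invol (i : ℤ) : Function.Involutive (rfun i) := by
  intro x; unfold rfun; split_ifs <;> omega

/-- The signed prefix reversal `r_{i+1}` (for `i : Fin n`, so that the
one-based index `i+1` ranges over `1, …, n`) as a map `±[n] → ±[n]`. -/
def rMap (n : ℕ) (i : Fin n) (x : PM n) : PM n :=
  ⟨rfun ((i : ℕ) + 1) x.1, by
    have hx := x.2; have hi := i.2; unfold rfun; split_ifs <;> constructor <;> omega⟩

/-- The signed prefix reversal `r_{i+1}` as a permutation of `±[n]`. -/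
def rPerm (n : ℕ) (i : Fin n) : Equiv.Perm (PM n) :=
  Function.Involutive.toPerm (rMap n i)
    (by intro x; apply Subtype.ext; exact rfun_invol _ x.1)

/-- The hyperoctahedral group `B_n`, realized as the subgroup of permutations
`σ` of `±[n]` satisfying `σ(-x) = -σ(x)`. -/
def Bgroup (n : ℕ) : Subgroup (Equiv.Perm (PM n)) where
  carrier := {σ | ∀ x, σ (negPM n x) = negPM n (σ x)}
  one_mem' := fun _ => rfl
  mul_mem' := by
    intro a b ha hb x
    simp only [Equiv.Perm.mul_apply, hb x, ha (b x)]
  inv_mem' := by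
    intro a ha x
    have h := ha (a⁻¹ x)
    rw [show a (a⁻¹ x) = x from a.apply_symm_apply x] at h
    rw [← h, show a⁻¹ (a (negPM n (a⁻¹ x))) = negPM n (a⁻¹ x) from a.symm_apply_apply _]

lemma rPerm_mem (n : ℕ) (i : Fin n) : rPerm n i ∈ Bgroup n := by
  intro x
  apply Subtype.ext
  show rfun ((i : ℕ) + 1) (-x.1) = -(rfun ((i : ℕ) + 1) x.1)
  have hx := x.2
  unfold rfun
  split_ifs <;> omega

/-- The signed prefix reversal `r_{i+1}` as an element of `B_n`. -/
def rElem (n : ℕ) (i : Fin n) : ↥(Bgroup n) := ⟨rPerm n i, rPerm_mem n i⟩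

lemma rElem_mul_self (n : ℕ) (i : Fin n) : rElem n i * rElem n i = 1 := by
  apply Subtype.ext
  apply Equiv.ext
  intro x
  apply Subtype.ext
  exact rfun_invol _ x.1

/-- The burnt pancake graph `BP_n`: the Cayley graph of `B_n` with respect to
the signed prefix reversals `r_1, …, r_n`. -/
def BP (n : ℕ) : SimpleGraph ↥(Bgroup n) where
  Adj σ τ := σ ≠ τ ∧ ∃ i : Fin n, τ = σ * rElem n i
  symm := ⟨by
    rintro σ τ ⟨hne, i, rfl⟩
    exact ⟨hne.symm, i, by rw [mul_assoc, rElem_mul_self, mul_one]⟩⟩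
  loopless := ⟨fun σ h => h.1 rfl⟩

instance (n : ℕ) : Finite ↥(Bgroup n) := Subtype.finite

noncomputable instance (n : ℕ) : Fintype ↥(Bgroup n) := Fintype.ofFinite _

noncomputable instance (n : ℕ) (v : ↥(Bgroup n)) : Fintype ((BP n).neighborSet v) :=
  Fintype.ofFinite _

/-- The eigenfunction profile: `g(x) = (n-1)·[|x|=n] + [|x|=1] - 1`. -/
noncomputable def gval (n : ℕ) (x : ℤ) : ℝ :=
  ((n : ℝ) - 1) * (if x.natAbs = n then 1 else 0) + (if x.natAbs = 1 then 1 else 0) - 1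

lemma filter_one (n : ℕ) (p : ℤ) (hp : p ≠ 0) (hpn : p.natAbs ≤ n) :
    Finset.filter (fun i : ℕ => (rfun ((i : ℤ) + 1) p).natAbs = 1) (Finset.range n)
      = {p.natAbs - 1} := by
  ext i
  rw [Finset.mem_filter]
  simp only [Finset.mem_range, Finset.mem_singleton, rfun]
  split_ifs <;> omega

lemma filter_n (n : ℕ) (hn : 3 ≤ n) (p : ℤ) (hp : p ≠ 0) (hpn : p.natAbs ≤ n) :
    Finset.filter (fun i : ℕ => (rfun ((i : ℤ) + 1) p).natAbs = n) (Finset.range n)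
      = if p.natAbs = n then Finset.range (n - 1)
        else if p.natAbs = 1 then {n - 1} else ∅ := by
  split_ifs with h1 h2 <;> ext i <;> rw [Finset.mem_filter] <;>
    simp only [Finset.mem_range, Finset.mem_singleton,
      Finset.notMem_empty, iff_false, not_and, rfun] <;>
    split_ifs <;> omega

lemma key_sum (n : ℕ) (hn : 3 ≤ n) (p : ℤ) (hp : p ≠ 0) (hpn : p.natAbs ≤ n) :
    ∑ i ∈ Finset.range n, gval n (rfun ((i : ℤ) + 1) p) = ((n : ℝ) - 1) * gval n p := by
  have h1 := filter_one n p hp hpn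
  have h2 := filter_n n hn p hp hpn
  simp only [gval, Finset.sum_sub_distrib, Finset.sum_add_distrib, ← Finset.mul_sum,
    Finset.sum_boole, Finset.sum_const, nsmul_eq_mul, mul_one, Finset.card_range, h1, h2]
  have hne : (p.natAbs = n → p.natAbs ≠ 1) := by omega
  split_ifs with ha hb
  · omega
  · simp only [Finset.card_range, Finset.card_singleton, Finset.card_empty]
    rw [Nat.cast_sub (by omega : 1 ≤ n)]
    push_cast
    ring
  · simp only [Finset.card_range, Finset.card_singleton, Finset.card_empty]
    push_cast
    ring
  · simp only [Finset.card_range, Finset.card_singleton, Finset.card_empty]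
    push_cast
    ring

/-- `1` as an element of `±[n]` (for `n ≥ 1`). -/
def onePM (n : ℕ) (hn : 1 ≤ n) : PM n := ⟨1, by constructor <;> omega⟩

lemma rElem_ne_one (n : ℕ) (hn : 1 ≤ n) (i : Fin n) : rElem n i ≠ 1 := by
  intro h
  have h2 : (rPerm n i) (onePM n hn) = onePM n hn := by
    have := congrArg (fun g : ↥(Bgroup n) => (g : Equiv.Perm (PM n)) (onePM n hn)) h
    exact this
  have h3 : rfun ((i : ℕ) + 1) 1 = 1 := congrArg Subtype.val h2
  simp only [rfun] at h3
  split_ifs at h3 <;> omega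

lemma rElem_injective (n : ℕ) (hn : 1 ≤ n) : Function.Injective (rElem n) := by
  intro i j h
  have h2 : (rPerm n i) (onePM n hn) = (rPerm n j) (onePM n hn) := by
    have := congrArg (fun g : ↥(Bgroup n) => (g : Equiv.Perm (PM n)) (onePM n hn)) h
    exact this
  have h3 : rfun ((i : ℕ) + 1) 1 = rfun ((j : ℕ) + 1) 1 := congrArg Subtype.val h2
  have hi := i.2; have hj := j.2
  simp only [rfun] at h3
  apply Fin.ext
  split_ifs at h3 <;> omega

lemma rElem_inv (n : ℕ) (i : Fin n) : (rElem n i)⁻¹ = rElem n i :=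
  inv_eq_of_mul_eq_one_left (rElem_mul_self n i)

/-- The eigenvector attached to the pancake `k`: it records `g` of the position
of pancake `k` in `σ`. -/
noncomputable def evec (n : ℕ) (k : PM n) (σ : ↥(Bgroup n)) : ℝ :=
  gval n (((σ : Equiv.Perm (PM n))⁻¹ k).1)

open scoped Classical in
lemma neighborFinset_BP (n : ℕ) (hn : 1 ≤ n) (σ : ↥(Bgroup n)) :
    (BP n).neighborFinset σ = Finset.image (fun i : Fin n => σ * rElem n i) Finset.univ := by
  ext τ
  simp only [SimpleGraph.mem_neighborFinset, Finset.mem_image, Finset.mem_univ, true_and]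
  show (σ ≠ τ ∧ ∃ i : Fin n, τ = σ * rElem n i) ↔ _
  constructor
  · rintro ⟨-, i, rfl⟩; exact ⟨i, rfl⟩
  · rintro ⟨i, rfl⟩
    refine ⟨fun h => rElem_ne_one n hn i ?_, i, rfl⟩
    exact (mul_left_cancel (a := σ) ((mul_one σ).trans h)).symm

open scoped Classical in
lemma evec_mem_eigenspace (n : ℕ) (hn : 3 ≤ n) (k : PM n) :
    evec n k ∈ Module.End.eigenspace (Matrix.toLin' ((BP n).adjMatrix ℝ)) ((n : ℝ) - 1) := by
  rw [Module.End.mem_eigenspace_iff]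
  funext σ
  have hn1 : 1 ≤ n := by omega
  have hmv : (Matrix.toLin' ((BP n).adjMatrix ℝ)) (evec n k) σ
      = ∑ u ∈ (BP n).neighborFinset σ, evec n k u := by
    rw [Matrix.toLin'_apply, SimpleGraph.adjMatrix_mulVec_apply]
    exact Finset.sum_congr (by congr!) (fun _ _ => rfl)
  rw [hmv, neighborFinset_BP n hn1 σ,
    Finset.sum_image (fun i _ j _ h => rElem_injective n hn1 (mul_left_cancel h))]
  have hstep : ∀ i : Fin n, evec n k (σ * rElem n i)
      = gval n (rfun ((i : ℕ) + 1) (((σ : Equiv.Perm (PM n))⁻¹ k).1)) := by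
    intro i
    unfold evec
    congr 1
  simp only [hstep]
  rw [Fin.sum_univ_eq_sum_range (fun i => gval n (rfun ((i : ℤ) + 1) (((σ : Equiv.Perm (PM n))⁻¹ k).1)))]
  have hp := ((σ : Equiv.Perm (PM n))⁻¹ k).2
  rw [key_sum n hn _ hp.1 hp.2]
  simp [evec, Pi.smul_apply, smul_eq_mul]

open scoped Classical in
/-- For `n ≥ 3`, the eigenvalue `n - 1` of the adjacency
matrix of the burnt pancake graph `BP_n` has multiplicity at least `2`. -/
theorem BP_eigenvalue_multiplicity (n : ℕ) (hn : 3 ≤ n) :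
    2 ≤ Module.finrank ℝ
        (Module.End.eigenspace (Matrix.toLin' ((BP n).adjMatrix ℝ)) ((n : ℝ) - 1)) := by
  have hn2 : ((n : ℝ) - 2) ≠ 0 := by
    have h3 : (3 : ℝ) ≤ (n : ℝ) := by exact_mod_cast hn
    linarith
  set E := Module.End.eigenspace (Matrix.toLin' ((BP n).adjMatrix ℝ)) ((n : ℝ) - 1) with hE
  set kn : PM n := ⟨(n : ℤ), by constructor <;> omega⟩ with hkn
  set k1 : PM n := ⟨1, by constructor <;> omega⟩ with hk1
  set va := evec n kn with hva
  set vb := evec n k1 with hvb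
  have hvaE : va ∈ E := evec_mem_eigenspace n hn kn
  have hvbE : vb ∈ E := evec_mem_eigenspace n hn k1
  set i0 : Fin n := ⟨n - 1, by omega⟩ with hi0
  set σ0 : ↥(Bgroup n) := rElem n i0 with hσ0
  have hcoeinv : ((σ0 : Equiv.Perm (PM n)))⁻¹ = (σ0 : Equiv.Perm (PM n)) := by
    have h := rElem_inv n i0
    calc ((σ0 : Equiv.Perm (PM n)))⁻¹ = ((σ0⁻¹ : ↥(Bgroup n)) : Equiv.Perm (PM n)) := rfl
      _ = (σ0 : Equiv.Perm (PM n)) := by rw [hσ0, h]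
  have hgvaln : gval n (n : ℤ) = (n : ℝ) - 2 := by
    unfold gval
    rw [if_pos (Int.natAbs_natCast n), if_neg (by omega)]
    ring
  have hgvalnegn : gval n (-(n : ℤ)) = (n : ℝ) - 2 := by
    unfold gval
    rw [if_pos (by simp), if_neg (by omega)]
    ring
  have hgval1 : gval n (1 : ℤ) = 0 := by
    unfold gval
    rw [if_neg (by omega)]
    norm_num
  have hgvalneg1 : gval n (-1 : ℤ) = 0 := by
    unfold gval
    rw [if_neg (by omega)]
    norm_num
  have hva1 : va 1 = (n : ℝ) - 2 := by
    rw [hva]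
    show gval n (((1 : ↥(Bgroup n)) : Equiv.Perm (PM n))⁻¹ kn).1 = _
    rw [show ((1 : ↥(Bgroup n)) : Equiv.Perm (PM n)) = 1 from rfl, inv_one]
    exact hgvaln
  have hvb1 : vb 1 = 0 := by
    rw [hvb]
    show gval n (((1 : ↥(Bgroup n)) : Equiv.Perm (PM n))⁻¹ k1).1 = _
    rw [show ((1 : ↥(Bgroup n)) : Equiv.Perm (PM n)) = 1 from rfl, inv_one]
    exact hgval1
  have hrn : ∀ x : PM n, ((σ0 : Equiv.Perm (PM n))⁻¹ x).1 = rfun (((n - 1 : ℕ) : ℤ) + 1) x.1 := by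
    intro x
    rw [hcoeinv]
    rfl
  have hva0 : va σ0 = 0 := by
    rw [hva]
    show gval n (((σ0 : Equiv.Perm (PM n))⁻¹ kn).1) = _
    rw [hrn kn]
    show gval n (rfun (((n - 1 : ℕ) : ℤ) + 1) (n : ℤ)) = _
    have harg : rfun (((n - 1 : ℕ) : ℤ) + 1) (n : ℤ) = -1 := by
      unfold rfun
      split_ifs <;> omega
    rw [harg]
    exact hgvalneg1
  have hvb0 : vb σ0 = (n : ℝ) - 2 := by
    rw [hvb]
    show gval n (((σ0 : Equiv.Perm (PM n))⁻¹ k1).1) = _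
    rw [hrn k1]
    show gval n (rfun (((n - 1 : ℕ) : ℤ) + 1) (1 : ℤ)) = _
    have harg : rfun (((n - 1 : ℕ) : ℤ) + 1) (1 : ℤ) = -(n : ℤ) := by
      unfold rfun
      split_ifs <;> omega
    rw [harg]
    exact hgvalnegn
  have hli : LinearIndependent ℝ ![va, vb] := by
    rw [LinearIndependent.pair_iff]
    intro s t hst
    have h1 := congrFun hst 1
    have h2 := congrFun hst σ0
    simp only [Pi.add_apply, Pi.smul_apply, smul_eq_mul, Pi.zero_apply, hva1, hvb1, hva0,
      hvb0, mul_zero, add_zero, zero_add] at h1 h2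
    refine ⟨?_, ?_⟩
    · rcases mul_eq_zero.mp h1 with h | h
      · exact h
      · exact absurd h hn2
    · rcases mul_eq_zero.mp h2 with h | h
      · exact h
      · exact absurd h hn2
  have hspan : Submodule.span ℝ (Set.range ![va, vb]) ≤ E := by
    rw [Submodule.span_le]
    rintro x ⟨i, rfl⟩
    fin_cases i <;> simpa
  calc 2 = Module.finrank ℝ (Submodule.span ℝ (Set.range ![va, vb])) := by
        rw [finrank_span_eq_card hli, Fintype.card_fin]
    _ ≤ Module.finrank ℝ E := Submodule.finrank_mono hspan
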